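/- (The regret preference model reduces to the partial return preference model for deterministic segments ending in terminal states with a common start state.) In a finite deterministic MDP, suppose V : S → ℝ and Q : S × A → ℝ satisfy the undiscounted Bellman optimality equations. Let (s¹, a¹) be a T-consistent segment of length n₁ and (s², a²) a T-consistent segment of length n₂, with the same starting state s¹(0) = s²(0), and with V(s¹(n₁)) = 0 and V(s²(n₂)) = 0 (both end in terminal states of zero value). Then logistic( (∑_{i<n₁} (Q(s¹(i),a¹(i)) − V(s¹(i)))) − (∑_{i<n₂} (Q(s²(i),a²(i)) − V(s²(i)))) ) = logistic( (∑_{i<n₁} r(s¹(i),a¹(i))) − (∑_{i<n₂} r(s²(i),a²(i))) ); that is, the regret preference probability for segment 1 over segment 2 equals the partial return preference probability. -/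

import Mathlib

open Fin.NatCast in
lemma telescope_sum {S A : Type*} (T : S → A → S) (r : S × A → ℝ)
    (V : S → ℝ) (Q : S × A → ℝ)
    (hQ : ∀ s a, Q (s, a) = r (s, a) + V (T s a))
    (n : ℕ) (s : Fin (n + 1) → S) (a : Fin n → A)
    (hcons : ∀ i : Fin n, s i.succ = T (s i.castSucc) (a i)) :
    ∑ i : Fin n, (Q (s i.castSucc, a i) - V (s i.castSucc)) =
      (∑ i : Fin n, r (s i.castSucc, a i)) + V (s (Fin.last n)) - V (s 0) := by
  have h : ∀ i : Fin n, Q (s i.castSucc, a i) - V (s i.castSucc)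
      = r (s i.castSucc, a i) + (V (s i.succ) - V (s i.castSucc)) := by
    intro i; rw [hQ, hcons i]; ring
  rw [Finset.sum_congr rfl (fun i _ => h i), Finset.sum_add_distrib]
  have key : ∑ i : Fin n, (V (s i.succ) - V (s i.castSucc)) = V (s (Fin.last n)) - V (s 0) := by
    have hterm : ∀ i : Fin n, V (s i.succ) - V (s i.castSucc)
        = (fun k : ℕ => V (s k)) (↑i + 1) - (fun k : ℕ => V (s k)) ↑i := by
      intro i
      congr 2
      · exact congrArg s (Fin.ext (by simp [Fin.val_natCast, Nat.mod_eq_of_lt (Nat.succ_lt_succ i.isLt)]))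
      · exact congrArg s (Fin.ext (by simp [Fin.val_natCast, Nat.mod_eq_of_lt (Nat.lt_succ_of_lt i.isLt)]))
    rw [Finset.sum_congr rfl (fun i _ => hterm i),
      Fin.sum_univ_eq_sum_range (fun k => (fun k : ℕ => V (s k)) (k + 1) - (fun k : ℕ => V (s k)) k),
      Finset.sum_range_sub (fun k : ℕ => V (s k))]
    exact congrArg (fun x => V (s x) - V (s 0)) (Fin.ext (by simp [Fin.val_natCast]))
  rw [key]; ring


/-- The logistic function `x ↦ 1 / (1 + exp (−x))`. -/
noncomputable def logistic (x : ℝ) : ℝ := 1 / (1 + Real.exp (-x))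

/-- The regret preference model reduces to the partial return preference model for deterministic
segments ending in terminal (zero-value) states with a common start state. -/
theorem regret_pref_eq_partial_return_pref
    {S A : Type*} [Fintype S] [Fintype A] [Nonempty S] [Nonempty A]
    (T : S → A → S) (r : S × A → ℝ)
    (V : S → ℝ) (Q : S × A → ℝ)
    (hV : ∀ s, V s = Finset.univ.sup' Finset.univ_nonempty (fun a => Q (s, a)))
    (hQ : ∀ s a, Q (s, a) = r (s, a) + V (T s a))
    (n1 n2 : ℕ)
    (s1 : Fin (n1 + 1) → S) (a1 : Fin n1 → A)
    (hcons1 : ∀ i : Fin n1, s1 i.succ = T (s1 i.castSucc) (a1 i))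
    (s2 : Fin (n2 + 1) → S) (a2 : Fin n2 → A)
    (hcons2 : ∀ i : Fin n2, s2 i.succ = T (s2 i.castSucc) (a2 i))
    (hstart : s1 0 = s2 0)
    (hend1 : V (s1 (Fin.last n1)) = 0)
    (hend2 : V (s2 (Fin.last n2)) = 0) :
    logistic ((∑ i : Fin n1, (Q (s1 i.castSucc, a1 i) - V (s1 i.castSucc))) -
        ∑ i : Fin n2, (Q (s2 i.castSucc, a2 i) - V (s2 i.castSucc))) =
      logistic ((∑ i : Fin n1, r (s1 i.castSucc, a1 i)) -
        ∑ i : Fin n2, r (s2 i.castSucc, a2 i)) := by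
  rw [telescope_sum T r V Q hQ n1 s1 a1 hcons1, telescope_sum T r V Q hQ n2 s2 a2 hcons2,
    hend1, hend2, hstart]
  ring_nf
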